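/- Under the hypotheses of the two-filter fusion (E[x xᵀ] = I, E[x x₋ᵀ] = P₋, E[x x̄₊ᵀ] = P̄₊, E[x̄₊ x₋ᵀ] = P̄₊ P₋, Q₋ = I − P₋ and Q̄₊ = I − P̄₊ invertible, Q₋^{-1} + Q̄₊^{-1} − I invertible), the error covariance Q := E[(x − x̂)(x − x̂)ᵀ] of the fused estimate x̂ = Q (Q₋^{-1} x₋ + Q̄₊^{-1} x̄₊) satisfies Q^{-1} = Q₋^{-1} + Q̄₊^{-1} − I. -/

import Mathlib

open Matrix MeasureTheory

/-- Cross-covariance matrix E[x yᵀ] of two (centered) random vectors. -/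
noncomputable def cov {Ω : Type*} [MeasurableSpace Ω] (ℙ : Measure Ω) {n m : ℕ}
    (x : Ω → Fin n → ℝ) (y : Ω → Fin m → ℝ) : Matrix (Fin n) (Fin m) ℝ :=
  Matrix.of fun i j => ∫ ω, x ω i * y ω j ∂ℙ

section Aux
variable {Ω : Type*} [MeasurableSpace Ω] {ℙ : Measure Ω} {n : ℕ}

lemma int_mul {f g : Ω → ℝ} (hf : MemLp f 2 ℙ) (hg : MemLp g 2 ℙ) :
    Integrable (fun ω => f ω * g ω) ℙ := by
  have h : MemLp (f • g) 1 ℙ := hg.smul hf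
  rw [memLp_one_iff_integrable] at h
  exact h

lemma memℒp_mulVec (M : Matrix (Fin n) (Fin n) ℝ) {y : Ω → Fin n → ℝ}
    (hy : ∀ i, MemLp (fun ω => y ω i) 2 ℙ) (i : Fin n) :
    MemLp (fun ω => M.mulVec (y ω) i) 2 ℙ := by
  simp only [Matrix.mulVec, dotProduct]
  exact memLp_finset_sum _ fun k _ => (hy k).const_mul (M i k)

lemma cov_flip (y : Ω → Fin n → ℝ) (z : Ω → Fin n → ℝ) :
    cov ℙ y z = (cov ℙ z y)ᵀ := by
  ext i j
  simp only [cov, Matrix.of_apply, Matrix.transpose_apply]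
  congr 1; funext ω; ring

lemma cov_mulVec_left (M : Matrix (Fin n) (Fin n) ℝ) {y z : Ω → Fin n → ℝ}
    (hy : ∀ i, MemLp (fun ω => y ω i) 2 ℙ) (hz : ∀ i, MemLp (fun ω => z ω i) 2 ℙ) :
    cov ℙ (fun ω => M.mulVec (y ω)) z = M * cov ℙ y z := by
  ext i j
  simp only [cov, Matrix.of_apply, Matrix.mul_apply, Matrix.mulVec, dotProduct]
  calc (∫ ω, (∑ k, M i k * y ω k) * z ω j ∂ℙ)
      = ∫ ω, ∑ k, M i k * (y ω k * z ω j) ∂ℙ := by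
        congr 1; funext ω; rw [Finset.sum_mul]
        exact Finset.sum_congr rfl fun k _ => mul_assoc _ _ _
    _ = ∑ k, ∫ ω, M i k * (y ω k * z ω j) ∂ℙ :=
        integral_finset_sum _ fun k _ => (int_mul (hy k) (hz j)).const_mul (M i k)
    _ = ∑ k, M i k * ∫ ω, y ω k * z ω j ∂ℙ := by
        simp [MeasureTheory.integral_const_mul]

lemma cov_mulVec_right (M : Matrix (Fin n) (Fin n) ℝ) {y z : Ω → Fin n → ℝ}
    (hy : ∀ i, MemLp (fun ω => y ω i) 2 ℙ) (hz : ∀ i, MemLp (fun ω => z ω i) 2 ℙ) :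
    cov ℙ y (fun ω => M.mulVec (z ω)) = cov ℙ y z * Mᵀ := by
  ext i j
  simp only [cov, Matrix.of_apply, Matrix.mul_apply, Matrix.mulVec, dotProduct,
    Matrix.transpose_apply]
  calc (∫ ω, y ω i * (∑ k, M j k * z ω k) ∂ℙ)
      = ∫ ω, ∑ k, (y ω i * z ω k) * M j k ∂ℙ := by
        congr 1; funext ω; rw [Finset.mul_sum]
        exact Finset.sum_congr rfl fun k _ => by ring
    _ = ∑ k, ∫ ω, (y ω i * z ω k) * M j k ∂ℙ :=
        integral_finset_sum _ fun k _ => (int_mul (hy i) (hz k)).mul_const (M j k)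
    _ = ∑ k, (∫ ω, y ω i * z ω k ∂ℙ) * M j k := by
        simp [MeasureTheory.integral_mul_const]

lemma cov_add_right {y z1 z2 : Ω → Fin n → ℝ}
    (hy : ∀ i, MemLp (fun ω => y ω i) 2 ℙ) (hz1 : ∀ i, MemLp (fun ω => z1 ω i) 2 ℙ)
    (hz2 : ∀ i, MemLp (fun ω => z2 ω i) 2 ℙ) :
    cov ℙ y (fun ω => z1 ω + z2 ω) = cov ℙ y z1 + cov ℙ y z2 := by
  ext i j
  simp only [cov, Matrix.of_apply, Matrix.add_apply, Pi.add_apply]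
  rw [← integral_add (int_mul (hy i) (hz1 j)) (int_mul (hy i) (hz2 j))]
  congr 1; funext ω; ring

lemma cov_add_left {y1 y2 z : Ω → Fin n → ℝ}
    (hy1 : ∀ i, MemLp (fun ω => y1 ω i) 2 ℙ) (hy2 : ∀ i, MemLp (fun ω => y2 ω i) 2 ℙ)
    (hz : ∀ i, MemLp (fun ω => z ω i) 2 ℙ) :
    cov ℙ (fun ω => y1 ω + y2 ω) z = cov ℙ y1 z + cov ℙ y2 z := by
  ext i j
  simp only [cov, Matrix.of_apply, Matrix.add_apply, Pi.add_apply]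
  rw [← integral_add (int_mul (hy1 i) (hz j)) (int_mul (hy2 i) (hz j))]
  congr 1; funext ω; ring

lemma cov_sub_right {y z1 z2 : Ω → Fin n → ℝ}
    (hy : ∀ i, MemLp (fun ω => y ω i) 2 ℙ) (hz1 : ∀ i, MemLp (fun ω => z1 ω i) 2 ℙ)
    (hz2 : ∀ i, MemLp (fun ω => z2 ω i) 2 ℙ) :
    cov ℙ y (fun ω => z1 ω - z2 ω) = cov ℙ y z1 - cov ℙ y z2 := by
  ext i j
  simp only [cov, Matrix.of_apply, Matrix.sub_apply, Pi.sub_apply]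
  rw [← integral_sub (int_mul (hy i) (hz1 j)) (int_mul (hy i) (hz2 j))]
  congr 1; funext ω; ring

lemma cov_sub_left {y1 y2 z : Ω → Fin n → ℝ}
    (hy1 : ∀ i, MemLp (fun ω => y1 ω i) 2 ℙ) (hy2 : ∀ i, MemLp (fun ω => y2 ω i) 2 ℙ)
    (hz : ∀ i, MemLp (fun ω => z ω i) 2 ℙ) :
    cov ℙ (fun ω => y1 ω - y2 ω) z = cov ℙ y1 z - cov ℙ y2 z := by
  ext i j
  simp only [cov, Matrix.of_apply, Matrix.sub_apply, Pi.sub_apply]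
  rw [← integral_sub (int_mul (hy1 i) (hz j)) (int_mul (hy2 i) (hz j))]
  congr 1; funext ω; ring

end Aux

lemma fusion_algebra {n : ℕ} (Qm Qbp R T Q : Matrix (Fin n) (Fin n) ℝ)
    (hm1 : Qm * R = 1) (hm2 : R * Qm = 1) (hb1 : Qbp * T = 1) (hb2 : T * Qbp = 1)
    (hq1 : Q * (R + T - 1) = 1) (hq2 : (R + T - 1) * Q = 1) :
    1 - ((1 - Qm) * (R * Q) + (1 - Qbp) * (T * Q)) -
      (Q * R * (1 - Qm) + Q * T * (1 - Qbp) -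
        (Q * R * ((1 - Qm) * (R * Q)) + Q * R * ((1 - Qm) * (1 - Qbp) * (T * Q)) +
         Q * T * ((1 - Qbp) * (1 - Qm) * (R * Q)) + Q * T * ((1 - Qbp) * (T * Q)))) = Q := by
  have e1 : (1 - Qm) * R = R - 1 := by rw [sub_mul, one_mul, hm1]
  have e2 : R * (1 - Qm) = R - 1 := by rw [mul_sub, mul_one, hm2]
  have e3 : (1 - Qbp) * T = T - 1 := by rw [sub_mul, one_mul, hb1]
  have e4 : T * (1 - Qbp) = T - 1 := by rw [mul_sub, mul_one, hb2]
  calc 1 - ((1 - Qm) * (R * Q) + (1 - Qbp) * (T * Q)) -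
      (Q * R * (1 - Qm) + Q * T * (1 - Qbp) -
        (Q * R * ((1 - Qm) * (R * Q)) + Q * R * ((1 - Qm) * (1 - Qbp) * (T * Q)) +
         Q * T * ((1 - Qbp) * (1 - Qm) * (R * Q)) + Q * T * ((1 - Qbp) * (T * Q))))
      = 1 - ((1 - Qm) * R) * Q - ((1 - Qbp) * T) * Q - Q * (R * (1 - Qm)) - Q * (T * (1 - Qbp))
        + Q * ((R * (1 - Qm)) * R) * Q + Q * ((R * (1 - Qm)) * ((1 - Qbp) * T)) * Q
        + Q * ((T * (1 - Qbp)) * ((1 - Qm) * R)) * Q + Q * ((T * (1 - Qbp)) * T) * Q := by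
          noncomm_ring
    _ = 1 - (R - 1) * Q - (T - 1) * Q - Q * (R - 1) - Q * (T - 1)
        + Q * ((R - 1) * R) * Q + Q * ((R - 1) * (T - 1)) * Q
        + Q * ((T - 1) * (R - 1)) * Q + Q * ((T - 1) * T) * Q := by rw [e1, e2, e3, e4]
    _ = 1 - ((R + T - 1) * Q - Q) - (Q * (R + T - 1) - Q)
        + ((Q * (R + T - 1)) * ((R + T - 1) * Q) - (Q * (R + T - 1)) * Q) := by noncomm_ring
    _ = Q := by rw [hq1, hq2]; noncomm_ring

theorem stmt_11 {Ω : Type*} [MeasurableSpace Ω] (ℙ : Measure Ω) [IsProbabilityMeasure ℙ]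
    {n : ℕ} (x xm xbp xhat : Ω → Fin n → ℝ)
    (hx2 : ∀ i, MemLp (fun ω => x ω i) 2 ℙ)
    (hxm2 : ∀ i, MemLp (fun ω => xm ω i) 2 ℙ)
    (hxbp2 : ∀ i, MemLp (fun ω => xbp ω i) 2 ℙ)
    (hx0 : ∀ i, ∫ ω, x ω i ∂ℙ = 0)
    (hxm0 : ∀ i, ∫ ω, xm ω i ∂ℙ = 0)
    (hxbp0 : ∀ i, ∫ ω, xbp ω i ∂ℙ = 0)
    (hnorm : cov ℙ x x = 1)
    (Qm Qbp Q : Matrix (Fin n) (Fin n) ℝ)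
    (hQm : Qm = 1 - cov ℙ xm xm) (hQbp : Qbp = 1 - cov ℙ xbp xbp)
    (hQminv : IsUnit Qm.det) (hQbpinv : IsUnit Qbp.det)
    (hcross1 : cov ℙ x xm = cov ℙ xm xm)
    (hcross2 : cov ℙ x xbp = cov ℙ xbp xbp)
    (hcross3 : cov ℙ xbp xm = cov ℙ xbp xbp * cov ℙ xm xm)
    (hQinv : IsUnit (Qm⁻¹ + Qbp⁻¹ - 1).det)
    (hQ : Q = (Qm⁻¹ + Qbp⁻¹ - 1)⁻¹)
    (hxhat : xhat = fun ω => Q.mulVec (Qm⁻¹.mulVec (xm ω) + Qbp⁻¹.mulVec (xbp ω))) :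
    (cov ℙ (fun ω => x ω - xhat ω) (fun ω => x ω - xhat ω))⁻¹ = Qm⁻¹ + Qbp⁻¹ - 1 := by
  have hPmT : (cov ℙ xm xm)ᵀ = cov ℙ xm xm := (cov_flip xm xm).symm
  have hPbT : (cov ℙ xbp xbp)ᵀ = cov ℙ xbp xbp := (cov_flip xbp xbp).symm
  have hQmT : Qmᵀ = Qm := by rw [hQm, Matrix.transpose_sub, Matrix.transpose_one, hPmT]
  have hQbT : Qbpᵀ = Qbp := by rw [hQbp, Matrix.transpose_sub, Matrix.transpose_one, hPbT]
  have hRT : (Qm⁻¹)ᵀ = Qm⁻¹ := by rw [Matrix.transpose_nonsing_inv, hQmT]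
  have hTT : (Qbp⁻¹)ᵀ = Qbp⁻¹ := by rw [Matrix.transpose_nonsing_inv, hQbT]
  have hQT : Qᵀ = Q := by
    rw [hQ, Matrix.transpose_nonsing_inv, Matrix.transpose_sub, Matrix.transpose_add, hRT, hTT,
      Matrix.transpose_one]
  have hm1 : Qm * Qm⁻¹ = 1 := Matrix.mul_nonsing_inv _ hQminv
  have hm2 : Qm⁻¹ * Qm = 1 := Matrix.nonsing_inv_mul _ hQminv
  have hb1 : Qbp * Qbp⁻¹ = 1 := Matrix.mul_nonsing_inv _ hQbpinv
  have hb2 : Qbp⁻¹ * Qbp = 1 := Matrix.nonsing_inv_mul _ hQbpinv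
  have hq1 : Q * (Qm⁻¹ + Qbp⁻¹ - 1) = 1 := by
    rw [hQ]; exact Matrix.nonsing_inv_mul _ hQinv
  have hq2 : (Qm⁻¹ + Qbp⁻¹ - 1) * Q = 1 := by
    rw [hQ]; exact Matrix.mul_nonsing_inv _ hQinv
  have hPmE : cov ℙ xm xm = 1 - Qm := by rw [hQm, sub_sub_cancel]
  have hPbE : cov ℙ xbp xbp = 1 - Qbp := by rw [hQbp, sub_sub_cancel]
  have hxhat' : xhat = fun ω => (Q * Qm⁻¹).mulVec (xm ω) + (Q * Qbp⁻¹).mulVec (xbp ω) := by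
    rw [hxhat]; funext ω
    rw [Matrix.mulVec_add, Matrix.mulVec_mulVec, Matrix.mulVec_mulVec]
  have hA2 : ∀ i, MemLp (fun ω => (Q * Qm⁻¹).mulVec (xm ω) i) 2 ℙ :=
    memℒp_mulVec _ hxm2
  have hB2 : ∀ i, MemLp (fun ω => (Q * Qbp⁻¹).mulVec (xbp ω) i) 2 ℙ :=
    memℒp_mulVec _ hxbp2
  have hS2 : ∀ i, MemLp (fun ω =>
      ((Q * Qm⁻¹).mulVec (xm ω) + (Q * Qbp⁻¹).mulVec (xbp ω)) i) 2 ℙ := fun i => by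
    exact (hA2 i).add (hB2 i)
  have hxhat2 : ∀ i, MemLp (fun ω => xhat ω i) 2 ℙ := by
    intro i; rw [hxhat']; exact hS2 i
  have hd2 : ∀ i, MemLp (fun ω => (x ω - xhat ω) i) 2 ℙ := fun i => by
    exact (hx2 i).sub (hxhat2 i)
  have hc1' : cov ℙ xm x = cov ℙ xm xm := by rw [cov_flip xm x, hcross1, hPmT]
  have hc2' : cov ℙ xbp x = cov ℙ xbp xbp := by rw [cov_flip xbp x, hcross2, hPbT]
  have hc3' : cov ℙ xm xbp = cov ℙ xm xm * cov ℙ xbp xbp := by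
    rw [cov_flip xm xbp, hcross3, Matrix.transpose_mul, hPmT, hPbT]
  have hAT : (Q * Qm⁻¹)ᵀ = Qm⁻¹ * Q := by rw [Matrix.transpose_mul, hRT, hQT]
  have hBT : (Q * Qbp⁻¹)ᵀ = Qbp⁻¹ * Q := by rw [Matrix.transpose_mul, hTT, hQT]
  have h1 : cov ℙ x xhat = (1 - Qm) * (Qm⁻¹ * Q) + (1 - Qbp) * (Qbp⁻¹ * Q) := by
    rw [hxhat', cov_add_right hx2 hA2 hB2, cov_mulVec_right (Q * Qm⁻¹) hx2 hxm2,
      cov_mulVec_right (Q * Qbp⁻¹) hx2 hxbp2, hcross1, hcross2, hAT, hBT, hPmE, hPbE]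
  have h2 : cov ℙ xhat x = Q * Qm⁻¹ * (1 - Qm) + Q * Qbp⁻¹ * (1 - Qbp) := by
    rw [hxhat', cov_add_left hA2 hB2 hx2, cov_mulVec_left (Q * Qm⁻¹) hxm2 hx2,
      cov_mulVec_left (Q * Qbp⁻¹) hxbp2 hx2, hc1', hc2', hPmE, hPbE]
  have h3 : cov ℙ xhat xhat =
      Q * Qm⁻¹ * ((1 - Qm) * (Qm⁻¹ * Q)) + Q * Qm⁻¹ * ((1 - Qm) * (1 - Qbp) * (Qbp⁻¹ * Q)) +
      Q * Qbp⁻¹ * ((1 - Qbp) * (1 - Qm) * (Qm⁻¹ * Q)) +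
      Q * Qbp⁻¹ * ((1 - Qbp) * (Qbp⁻¹ * Q)) := by
    rw [hxhat', cov_add_left hA2 hB2 hS2, cov_add_right hA2 hA2 hB2, cov_add_right hB2 hA2 hB2,
      cov_mulVec_right (Q * Qm⁻¹) hA2 hxm2, cov_mulVec_right (Q * Qbp⁻¹) hA2 hxbp2,
      cov_mulVec_right (Q * Qm⁻¹) hB2 hxm2, cov_mulVec_right (Q * Qbp⁻¹) hB2 hxbp2,
      cov_mulVec_left (Q * Qm⁻¹) hxm2 hxm2, cov_mulVec_left (Q * Qm⁻¹) hxm2 hxbp2,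
      cov_mulVec_left (Q * Qbp⁻¹) hxbp2 hxm2, cov_mulVec_left (Q * Qbp⁻¹) hxbp2 hxbp2,
      hAT, hBT, hc3', hcross3, hPmE, hPbE]
    noncomm_ring
  have hC : cov ℙ (fun ω => x ω - xhat ω) (fun ω => x ω - xhat ω) = Q := by
    rw [cov_sub_left hx2 hxhat2 hd2, cov_sub_right hx2 hx2 hxhat2,
      cov_sub_right hxhat2 hx2 hxhat2, hnorm, h1, h2, h3]
    exact fusion_algebra Qm Qbp Qm⁻¹ Qbp⁻¹ Q hm1 hm2 hb1 hb2 hq1 hq2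
  rw [hC, hQ, Matrix.nonsing_inv_nonsing_inv _ hQinv]
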